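/- If θ₁⁰ ≠ θ₂⁰, then λ₁^{opt}(n) → 1 and λ₂^{opt}(n) → 0 in probability as n → ∞; that is, for every ε > 0, P(|λ₁^{opt}(n) − 1| ≤ ε) → 1 and P(|λ₂^{opt}(n)| < ε) → 1. -/

import Mathlib

open MeasureTheory ProbabilityTheory Filter Topology

/-- Leave-one-out mean from the first `n` observations, deleting the `j`-th one. -/
noncomputable def looM {Ω : Type*} (Y : ℕ → Ω → ℝ) (n j : ℕ) (ω : Ω) : ℝ :=
  (1 / ((n : ℝ) - 1)) * ∑ k ∈ (Finset.range n).erase j, Y k ω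

/-- `S₁ᵉ = (1/n) ∑ⱼ (X̄₁^{(−j)} − X̄₂^{(−j)})²`. -/
noncomputable def S1e {Ω : Type*} (Y1 Y2 : ℕ → Ω → ℝ) (n : ℕ) (ω : Ω) : ℝ :=
  (1 / (n : ℝ)) * ∑ j ∈ Finset.range n, (looM Y1 n j ω - looM Y2 n j ω) ^ 2

/-- `S₂ᵉ = (1/n) ∑ⱼ (X̄₁^{(−j)} − X̄₂^{(−j)})(X̄₁^{(−j)} − X_{1j})`. -/
noncomputable def S2e {Ω : Type*} (Y1 Y2 : ℕ → Ω → ℝ) (n : ℕ) (ω : Ω) : ℝ :=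
  (1 / (n : ℝ)) * ∑ j ∈ Finset.range n,
    (looM Y1 n j ω - looM Y2 n j ω) * (looM Y1 n j ω - Y1 j ω)

/-- The cross-validated weight `λ₂^{opt}(n) = S₂ᵉ/S₁ᵉ` (junk value when `S₁ᵉ = 0`). -/
noncomputable def lam2opt {Ω : Type*} (Y1 Y2 : ℕ → Ω → ℝ) (n : ℕ) (ω : Ω) : ℝ :=
  S2e Y1 Y2 n ω / S1e Y1 Y2 n ω

lemma looM_eq {Ω : Type*} (Y : ℕ → Ω → ℝ) (n j : ℕ) (hj : j ∈ Finset.range n) (ω : Ω) :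
    looM Y n j ω = (1 / ((n : ℝ) - 1)) * ((∑ k ∈ Finset.range n, Y k ω) - Y j ω) := by
  rw [looM]
  congr 1
  exact eq_sub_of_add_eq (Finset.sum_erase_add _ _ hj)

lemma S1e_eq {Ω : Type*} (Y1 Y2 : ℕ → Ω → ℝ) (n : ℕ) (hn : 2 ≤ n) (ω : Ω) :
    S1e Y1 Y2 n ω =
      ((∑ j ∈ Finset.range n, (Y1 j ω - Y2 j ω)) / n) ^ 2
      + ((∑ j ∈ Finset.range n, (Y1 j ω - Y2 j ω) ^ 2) / n
          - ((∑ j ∈ Finset.range n, (Y1 j ω - Y2 j ω)) / n) ^ 2)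
        * (1 / ((n : ℝ) - 1) ^ 2) := by
  have hn0 : (n : ℝ) ≠ 0 := by positivity
  have hn1 : (n : ℝ) - 1 ≠ 0 := by
    have : (2 : ℝ) ≤ n := by exact_mod_cast hn
    nlinarith
  set SD : ℝ := ∑ j ∈ Finset.range n, (Y1 j ω - Y2 j ω) with hSD
  have key : ∑ j ∈ Finset.range n, (looM Y1 n j ω - looM Y2 n j ω) ^ 2
      = (1 / ((n:ℝ) - 1))^2 * ((n : ℝ) * SD ^ 2 - 2 * SD ^ 2
          + ∑ j ∈ Finset.range n, (Y1 j ω - Y2 j ω) ^ 2) := by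
    have step : ∀ j ∈ Finset.range n, (looM Y1 n j ω - looM Y2 n j ω) ^ 2
        = (1 / ((n:ℝ) - 1))^2 * (SD ^ 2 - 2 * SD * (Y1 j ω - Y2 j ω) + (Y1 j ω - Y2 j ω) ^ 2) := by
      intro j hj
      rw [looM_eq Y1 n j hj, looM_eq Y2 n j hj, hSD, Finset.sum_sub_distrib]
      ring
    rw [Finset.sum_congr rfl step, ← Finset.mul_sum]
    congr 1
    rw [Finset.sum_add_distrib, Finset.sum_sub_distrib, Finset.sum_const, Finset.card_range,
      ← Finset.mul_sum, ← hSD]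
    ring
  rw [S1e, key]
  field_simp
  ring

lemma S2e_eq {Ω : Type*} (Y1 Y2 : ℕ → Ω → ℝ) (n : ℕ) (hn : 2 ≤ n) (ω : Ω) :
    S2e Y1 Y2 n ω =
      ((n : ℝ) / ((n : ℝ) - 1) ^ 2) *
        ((∑ j ∈ Finset.range n, (Y1 j ω - Y2 j ω) * Y1 j ω) / n
          - ((∑ j ∈ Finset.range n, (Y1 j ω - Y2 j ω)) / n)
            * ((∑ j ∈ Finset.range n, Y1 j ω) / n)) := by
  have hn0 : (n : ℝ) ≠ 0 := by positivity
  have hn1 : (n : ℝ) - 1 ≠ 0 := by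
    have : (2 : ℝ) ≤ n := by exact_mod_cast hn
    nlinarith
  set SD : ℝ := ∑ j ∈ Finset.range n, (Y1 j ω - Y2 j ω) with hSD
  set S1 : ℝ := ∑ j ∈ Finset.range n, Y1 j ω with hS1
  have key : ∑ j ∈ Finset.range n,
        (looM Y1 n j ω - looM Y2 n j ω) * (looM Y1 n j ω - Y1 j ω)
      = (1 / ((n:ℝ) - 1))^2 * ((n : ℝ) * (∑ j ∈ Finset.range n, (Y1 j ω - Y2 j ω) * Y1 j ω)
          - SD * S1) := by
    have step : ∀ j ∈ Finset.range n,
        (looM Y1 n j ω - looM Y2 n j ω) * (looM Y1 n j ω - Y1 j ω)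
        = (1 / ((n:ℝ) - 1))^2 * (SD * S1 - (n : ℝ) * SD * Y1 j ω
            - S1 * (Y1 j ω - Y2 j ω) + (n : ℝ) * ((Y1 j ω - Y2 j ω) * Y1 j ω)) := by
      intro j hj
      rw [looM_eq Y1 n j hj, looM_eq Y2 n j hj, hSD, hS1, Finset.sum_sub_distrib]
      field_simp
      ring
    rw [Finset.sum_congr rfl step, ← Finset.mul_sum]
    congr 1
    rw [Finset.sum_add_distrib, Finset.sum_sub_distrib, Finset.sum_sub_distrib,
      Finset.sum_const, Finset.card_range, ← Finset.mul_sum, ← Finset.mul_sum,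
      ← Finset.mul_sum, ← hSD, ← hS1]
    ring
  rw [S2e, key]
  field_simp

/-- SLLN for a measurable function of an i.i.d. sequence. -/
lemma slln_comp {Ω : Type*} [MeasurableSpace Ω] (μ : Measure Ω)
    (X : ℕ → Ω → ℝ × ℝ)
    (hindep : iIndepFun X μ)
    (hident : ∀ j, IdentDistrib (X j) (X 0) μ μ)
    (f : ℝ × ℝ → ℝ) (hf : Measurable f)
    (hint : Integrable (fun ω => f (X 0 ω)) μ) :
    ∀ᵐ ω ∂μ, Tendsto (fun n : ℕ => (∑ i ∈ Finset.range n, f (X i ω)) / n) atTop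
      (𝓝 (∫ ω, f (X 0 ω) ∂μ)) := by
  exact strong_law_ae_real (fun i ω => f (X i ω)) hint
    (fun i j hij => ((hindep.indepFun hij).comp hf hf))
    (fun i => (hident i).comp hf)

/-- `1/((n-1))^2 → 0`. -/
lemma tendsto_one_div_sq : Tendsto (fun n : ℕ => 1 / ((n : ℝ) - 1) ^ 2) atTop (𝓝 0) := by
  have h1 : Tendsto (fun n : ℕ => (n : ℝ) - 1) atTop atTop :=
    tendsto_atTop_add_const_right atTop (-1) tendsto_natCast_atTop_atTop
  have h2 : Tendsto (fun n : ℕ => ((n : ℝ) - 1) ^ 2) atTop atTop := (tendsto_pow_atTop two_ne_zero).comp h1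
  have h3 := h2.inv_tendsto_atTop
  simp only [one_div]
  exact h3

/-- `n/((n-1))^2 → 0`. -/
lemma tendsto_n_div_sq : Tendsto (fun n : ℕ => (n : ℝ) / ((n : ℝ) - 1) ^ 2) atTop (𝓝 0) := by
  have h1 : Tendsto (fun n : ℕ => (n : ℝ) - 1) atTop atTop :=
    tendsto_atTop_add_const_right atTop (-1) tendsto_natCast_atTop_atTop
  have hinv : Tendsto (fun n : ℕ => ((n : ℝ) - 1)⁻¹) atTop (𝓝 0) := h1.inv_tendsto_atTop
  have hsum : Tendsto (fun n : ℕ => ((n : ℝ) - 1)⁻¹ + 1 / ((n : ℝ) - 1) ^ 2) atTop (𝓝 0) := by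
    simpa using hinv.add tendsto_one_div_sq
  apply hsum.congr'
  filter_upwards [eventually_ge_atTop 2] with n hn
  have hn1 : (n : ℝ) - 1 ≠ 0 := by
    have : (2 : ℝ) ≤ n := by exact_mod_cast hn
    nlinarith
  field_simp
  ring

/-- If `θ₁⁰ ≠ θ₂⁰`, then `λ₁^{opt}(n) → 1` and `λ₂^{opt}(n) → 0` in probability. -/
theorem stmt_10 {Ω : Type*} [MeasurableSpace Ω] (μ : Measure Ω) [IsProbabilityMeasure μ]
    (X : ℕ → Ω → ℝ × ℝ) (hmeas : ∀ j, Measurable (X j))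
    (hindep : iIndepFun X μ)
    (hident : ∀ j, IdentDistrib (X j) (X 0) μ μ)
    (hL2a : MemLp (fun ω => (X 0 ω).1) 2 μ)
    (hL2b : MemLp (fun ω => (X 0 ω).2) 2 μ)
    (θ1 θ2 σ1 σ2 ρ : ℝ)
    (hθ1 : θ1 = ∫ ω, (X 0 ω).1 ∂μ) (hθ2 : θ2 = ∫ ω, (X 0 ω).2 ∂μ)
    (hσ1 : σ1 ^ 2 = variance (fun ω => (X 0 ω).1) μ)
    (hσ2 : σ2 ^ 2 = variance (fun ω => (X 0 ω).2) μ)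
    (hσ1pos : 0 < σ1) (hσ2pos : 0 < σ2)
    (hρ : ρ * (σ1 * σ2) = ∫ ω, ((X 0 ω).1 - θ1) * ((X 0 ω).2 - θ2) ∂μ)
    (hne : θ1 ≠ θ2) :
    ∀ ε : ℝ, 0 < ε →
      Tendsto
        (fun n => μ {ω |
          |(1 - lam2opt (fun j ω => (X j ω).1) (fun j ω => (X j ω).2) n ω) - 1| ≤ ε})
        atTop (nhds 1)
      ∧ Tendsto
        (fun n => μ {ω |
          |lam2opt (fun j ω => (X j ω).1) (fun j ω => (X j ω).2) n ω| < ε})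
        atTop (nhds 1) := by
  set Y1 : ℕ → Ω → ℝ := fun j ω => (X j ω).1 with hY1def
  set Y2 : ℕ → Ω → ℝ := fun j ω => (X j ω).2 with hY2def
  -- integrability facts
  have hiY1 : Integrable (fun ω => (X 0 ω).1) μ := hL2a.integrable one_le_two
  have hiY2 : Integrable (fun ω => (X 0 ω).2) μ := hL2b.integrable one_le_two
  have hD2 : MemLp (fun ω => (X 0 ω).1 - (X 0 ω).2) 2 μ := hL2a.sub hL2b
  have hiD : Integrable (fun ω => (X 0 ω).1 - (X 0 ω).2) μ := hD2.integrable one_le_two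
  have hiDsq : Integrable (fun ω => ((X 0 ω).1 - (X 0 ω).2) ^ 2) μ := hD2.integrable_sq
  have h2ab : MemLp (fun ω => 2 * (X 0 ω).1 - (X 0 ω).2) 2 μ :=
    ((hL2a.const_mul 2).sub hL2b)
  have hiDY1 : Integrable (fun ω => ((X 0 ω).1 - (X 0 ω).2) * (X 0 ω).1) μ := by
    have heq : (fun ω => ((X 0 ω).1 - (X 0 ω).2) * (X 0 ω).1)
        = fun ω => ((2 * (X 0 ω).1 - (X 0 ω).2) ^ 2 - ((X 0 ω).1) ^ 2
            - ((X 0 ω).1 - (X 0 ω).2) ^ 2) / 2 := by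
      funext ω; ring
    rw [heq]
    exact ((h2ab.integrable_sq.sub hL2a.integrable_sq).sub hiDsq).div_const 2
  -- measurability of component maps
  have hmf1 : Measurable (fun p : ℝ × ℝ => p.1) := measurable_fst
  have hmf2 : Measurable (fun p : ℝ × ℝ => p.1 - p.2) := measurable_fst.sub measurable_snd
  have hmf3 : Measurable (fun p : ℝ × ℝ => (p.1 - p.2) ^ 2) := hmf2.pow_const 2
  have hmf4 : Measurable (fun p : ℝ × ℝ => (p.1 - p.2) * p.1) := hmf2.mul measurable_fst
  -- the four SLLN statements
  have hA := slln_comp μ X hindep hident _ hmf2 hiD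
  have hQ := slln_comp μ X hindep hident _ hmf3 hiDsq
  have hM1 := slln_comp μ X hindep hident _ hmf1 hiY1
  have hR := slln_comp μ X hindep hident _ hmf4 hiDY1
  -- the limit of the difference averages is θ1 - θ2
  have hAval : (∫ ω, ((X 0 ω).1 - (X 0 ω).2) ∂μ) = θ1 - θ2 := by
    rw [integral_sub hiY1 hiY2, hθ1, hθ2]
  set d : ℝ := θ1 - θ2 with hddef
  have hd : d ≠ 0 := sub_ne_zero.mpr hne
  -- almost sure convergence of lam2opt to 0
  have hae : ∀ᵐ ω ∂μ, Tendsto (fun n : ℕ => lam2opt Y1 Y2 n ω) atTop (𝓝 0) := by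
    filter_upwards [hA, hQ, hM1, hR] with ω hAω hQω hM1ω hRω
    rw [hAval] at hAω
    set Qlim : ℝ := ∫ ω, ((X 0 ω).1 - (X 0 ω).2) ^ 2 ∂μ
    set Mlim : ℝ := ∫ ω, (X 0 ω).1 ∂μ
    set Rlim : ℝ := ∫ ω, ((X 0 ω).1 - (X 0 ω).2) * (X 0 ω).1 ∂μ
    have hS1 : Tendsto (fun n : ℕ => S1e Y1 Y2 n ω) atTop (𝓝 (d ^ 2)) := by
      have hmain : Tendsto (fun n : ℕ =>
          ((∑ j ∈ Finset.range n, (Y1 j ω - Y2 j ω)) / n) ^ 2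
          + ((∑ j ∈ Finset.range n, (Y1 j ω - Y2 j ω) ^ 2) / n
              - ((∑ j ∈ Finset.range n, (Y1 j ω - Y2 j ω)) / n) ^ 2)
            * (1 / ((n : ℝ) - 1) ^ 2)) atTop (𝓝 (d ^ 2 + (Qlim - d ^ 2) * 0)) :=
        (hAω.pow 2).add ((hQω.sub (hAω.pow 2)).mul tendsto_one_div_sq)
      rw [mul_zero, add_zero] at hmain
      apply hmain.congr'
      filter_upwards [eventually_ge_atTop 2] with n hn
      exact (S1e_eq Y1 Y2 n hn ω).symm
    have hS2 : Tendsto (fun n : ℕ => S2e Y1 Y2 n ω) atTop (𝓝 0) := by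
      have hmain : Tendsto (fun n : ℕ =>
          ((n : ℝ) / ((n : ℝ) - 1) ^ 2) *
            ((∑ j ∈ Finset.range n, (Y1 j ω - Y2 j ω) * Y1 j ω) / n
              - ((∑ j ∈ Finset.range n, (Y1 j ω - Y2 j ω)) / n)
                * ((∑ j ∈ Finset.range n, Y1 j ω) / n))) atTop
          (𝓝 (0 * (Rlim - d * Mlim))) :=
        tendsto_n_div_sq.mul (hRω.sub (hAω.mul hM1ω))
      rw [zero_mul] at hmain
      apply hmain.congr'
      filter_upwards [eventually_ge_atTop 2] with n hn
      exact (S2e_eq Y1 Y2 n hn ω).symm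
    have := hS2.div hS1 (pow_ne_zero 2 hd)
    rw [zero_div] at this
    exact this
  -- measurability of lam2opt
  have hmY1 : ∀ j, Measurable (Y1 j) := fun j => measurable_fst.comp (hmeas j)
  have hmY2 : ∀ j, Measurable (Y2 j) := fun j => measurable_snd.comp (hmeas j)
  have hmloo : ∀ (Y : ℕ → Ω → ℝ), (∀ j, Measurable (Y j)) → ∀ n j, Measurable (looM Y n j) := by
    intro Y hY n j
    exact measurable_const.mul (Finset.measurable_sum _ fun k _ => hY k)
  have hmlam : ∀ n, Measurable (fun ω => lam2opt Y1 Y2 n ω) := by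
    intro n
    have h1 : Measurable (fun ω => S1e Y1 Y2 n ω) :=
      measurable_const.mul (Finset.measurable_sum _ fun j _ =>
        ((hmloo Y1 hmY1 n j).sub (hmloo Y2 hmY2 n j)).pow_const 2)
    have h2 : Measurable (fun ω => S2e Y1 Y2 n ω) :=
      measurable_const.mul (Finset.measurable_sum _ fun j _ =>
        ((hmloo Y1 hmY1 n j).sub (hmloo Y2 hmY2 n j)).mul
          ((hmloo Y1 hmY1 n j).sub (hmY1 j)))
    exact h2.div h1
  -- convergence in measure
  have hTIM : TendstoInMeasure μ (fun n ω => lam2opt Y1 Y2 n ω) atTop (fun _ => 0) :=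
    tendstoInMeasure_of_tendsto_ae (fun n => (hmlam n).aestronglyMeasurable) hae
  intro ε hε
  have hbad : Tendsto (fun n => μ {ω | ε ≤ |lam2opt Y1 Y2 n ω|}) atTop (𝓝 0) := by
    have := tendstoInMeasure_iff_dist.mp hTIM ε hε
    simpa [Real.dist_eq] using this
  have hsetm : ∀ n, MeasurableSet {ω | ε ≤ |lam2opt Y1 Y2 n ω|} := fun n =>
    measurableSet_le measurable_const (hmlam n).abs
  have hlt : Tendsto (fun n => μ {ω | |lam2opt Y1 Y2 n ω| < ε}) atTop (𝓝 1) := by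
    have hcompl : ∀ n, {ω | |lam2opt Y1 Y2 n ω| < ε}
        = {ω | ε ≤ |lam2opt Y1 Y2 n ω|}ᶜ := by
      intro n; ext ω; simp [not_le]
    have : Tendsto (fun n => 1 - μ {ω | ε ≤ |lam2opt Y1 Y2 n ω|}) atTop (𝓝 (1 - 0)) :=
      ENNReal.Tendsto.sub tendsto_const_nhds hbad (Or.inl ENNReal.one_ne_top)
    rw [tsub_zero] at this
    apply this.congr
    intro n
    rw [hcompl n, prob_compl_eq_one_sub (hsetm n)]
  refine ⟨?_, hlt⟩
  have habs : ∀ x : ℝ, |(1 - x) - 1| = |x| := by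
    intro x
    rw [show (1 - x) - 1 = -x by ring, abs_neg]
  simp only [habs]
  refine tendsto_of_tendsto_of_tendsto_of_le_of_le hlt tendsto_const_nhds
    (fun n => measure_mono fun ω hω => by
      simp only [Set.mem_setOf_eq] at hω ⊢; exact le_of_lt hω) (fun n => prob_le_one)
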